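/- arXiv:math/0503588 — 4 statements merged into one kernel-verified Lean document; each statement's English description precedes it below -/
import Mathlib

section
/- Let u and v be almost-excessive functions for (p_t). Then the quantity (1/t)∫_E (u − p_t u)·v dm is nondecreasing as t ↓ 0; that is, for all 0 < s ≤ t one has (1/s)∫_E (u − p_s u)·v dm ≥ (1/t)∫_E (u − p_t u)·v dm. -/
open MeasureTheory ProbabilityTheory Filter
open scoped ENNReal

section EnergyAux

variable {E : Type*} [MeasurableSpace E]

/-- Measurability of the kernel integral of a fixed function (no s-finiteness needed). -/
theorem energyAux.measurable_lintegral (κ : Kernel E E) {f : E → ℝ≥0∞} (hf : Measurable f) :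
    Measurable fun a => ∫⁻ b, f b ∂κ a :=
  (Measure.measurable_lintegral hf).comp κ.measurable

/-- The pointwise decrement `u - min u (p_h u)`. -/
noncomputable def energyAux.W (p : ℝ → Kernel E E) (u : E → ℝ≥0∞) (h : ℝ) : E → ℝ≥0∞ :=
  fun x => u x - min (u x) (∫⁻ y, u y ∂(p h x))

theorem energyAux.W_measurable (p : ℝ → Kernel E E) {u : E → ℝ≥0∞} (hu : Measurable u)
    (h : ℝ) : Measurable (energyAux.W p u h) :=
  hu.sub (hu.min (energyAux.measurable_lintegral (p h) hu))

/-- The sequence of "energy increments" on the grid of mesh `h`. -/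
noncomputable def energyAux.D (m : Measure E) (p : ℝ → Kernel E E) (u v : E → ℝ≥0∞)
    (h : ℝ) : ℕ → ℝ≥0∞ :=
  fun j =>
    if j = 0 then ∫⁻ x, energyAux.W p u h x * v x ∂m
    else ∫⁻ x, energyAux.W p u h x * (∫⁻ y, v y ∂(p (j * h) x)) ∂m

/-- Chebyshev-type counting inequality for antitone sequences in `ℝ≥0∞`. -/
theorem energyAux.cheby (D : ℕ → ℝ≥0∞) (hD : Antitone D) {N M : ℕ} (hNM : N ≤ M) :
    (N : ℝ≥0∞) * ∑ j ∈ Finset.range M, D j ≤ (M : ℝ≥0∞) * ∑ j ∈ Finset.range N, D j := by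
  have hsplit : ∑ j ∈ Finset.range M, D j
      = ∑ j ∈ Finset.range N, D j + ∑ j ∈ Finset.Ico N M, D j := by
    rw [Finset.range_eq_Ico, Finset.range_eq_Ico]
    exact (Finset.sum_Ico_consecutive D (Nat.zero_le N) hNM).symm
  have h1 : ∑ j ∈ Finset.Ico N M, D j ≤ ((M - N : ℕ) : ℝ≥0∞) * D N := by
    calc ∑ j ∈ Finset.Ico N M, D j ≤ ∑ _j ∈ Finset.Ico N M, D N :=
          Finset.sum_le_sum fun j hj => hD (Finset.mem_Ico.mp hj).1
      _ = ((M - N : ℕ) : ℝ≥0∞) * D N := by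
          rw [Finset.sum_const, Nat.card_Ico, nsmul_eq_mul]
  have h2 : (N : ℝ≥0∞) * D N ≤ ∑ j ∈ Finset.range N, D j := by
    calc (N : ℝ≥0∞) * D N = ∑ _j ∈ Finset.range N, D N := by
          rw [Finset.sum_const, Finset.card_range, nsmul_eq_mul]
      _ ≤ ∑ j ∈ Finset.range N, D j :=
          Finset.sum_le_sum fun j hj => hD (le_of_lt (Finset.mem_range.mp hj))
  calc (N : ℝ≥0∞) * ∑ j ∈ Finset.range M, D j
      = (N : ℝ≥0∞) * ∑ j ∈ Finset.range N, D j
          + (N : ℝ≥0∞) * ∑ j ∈ Finset.Ico N M, D j := by rw [hsplit, mul_add]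
    _ ≤ (N : ℝ≥0∞) * ∑ j ∈ Finset.range N, D j
          + (N : ℝ≥0∞) * (((M - N : ℕ) : ℝ≥0∞) * D N) :=
        add_le_add_right (mul_le_mul_right h1 _) _
    _ = (N : ℝ≥0∞) * ∑ j ∈ Finset.range N, D j
          + ((M - N : ℕ) : ℝ≥0∞) * ((N : ℝ≥0∞) * D N) := by ring_nf
    _ ≤ (N : ℝ≥0∞) * ∑ j ∈ Finset.range N, D j
          + ((M - N : ℕ) : ℝ≥0∞) * ∑ j ∈ Finset.range N, D j :=
        add_le_add_right (mul_le_mul_right h2 _) _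
    _ = ((N : ℝ≥0∞) + ((M - N : ℕ) : ℝ≥0∞)) * ∑ j ∈ Finset.range N, D j := by
        rw [add_mul]
    _ = (M : ℝ≥0∞) * ∑ j ∈ Finset.range N, D j := by
        have hMN : N + (M - N) = M := by omega
        rw [← Nat.cast_add, hMN]

end EnergyAux

/-- Let `(p_t)_{t>0}` be a symmetric sub-Markovian semigroup of kernels on a
measurable space `E` with a σ-finite measure `m`.  If `u` and `v` are almost-excessive for
`(p_t)` (i.e. nonnegative measurable, finite `m`-a.e., with `p_t u ≤ u` `m`-a.e. for all `t > 0`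
and `p_t u ↑ u` `m`-a.e. as `t ↓ 0`), then `(1/t) ∫ (u - p_t u) v dm` is nondecreasing as
`t ↓ 0`: for `0 < s ≤ t` one has
`(1/s) ∫ (u - p_s u) v dm ≥ (1/t) ∫ (u - p_t u) v dm`. -/
theorem energy_ratio_monotone_as_t_decreases
    {E : Type*} [MeasurableSpace E] (m : Measure E) [SigmaFinite m]
    (p : ℝ → Kernel E E)
    (hsub : ∀ t : ℝ, 0 < t → ∀ x : E, p t x Set.univ ≤ 1)
    (hsemi : ∀ s t : ℝ, 0 < s → 0 < t → ∀ f : E → ℝ≥0∞, Measurable f → ∀ x : E,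
        ∫⁻ y, f y ∂(p (t + s) x) = ∫⁻ y, ∫⁻ z, f z ∂(p s y) ∂(p t x))
    (hsym : ∀ t : ℝ, 0 < t → ∀ f g : E → ℝ≥0∞, Measurable f → Measurable g →
        ∫⁻ x, (∫⁻ y, f y ∂(p t x)) * g x ∂m = ∫⁻ x, f x * ∫⁻ y, g y ∂(p t x) ∂m)
    (u v : E → ℝ≥0∞) (hu : Measurable u) (hv : Measurable v)
    (hufin : ∀ᵐ x ∂m, u x < ∞) (hvfin : ∀ᵐ x ∂m, v x < ∞)
    (huexc : ∀ t : ℝ, 0 < t → (fun x => ∫⁻ y, u y ∂(p t x)) ≤ᵐ[m] u)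
    (humono : ∀ s t : ℝ, 0 < s → s ≤ t →
        (fun x => ∫⁻ y, u y ∂(p t x)) ≤ᵐ[m] fun x => ∫⁻ y, u y ∂(p s x))
    (hulim : ∀ᵐ x ∂m, Tendsto (fun t : ℝ => ∫⁻ y, u y ∂(p t x))
        (nhdsWithin 0 (Set.Ioi 0)) (nhds (u x)))
    (hvexc : ∀ t : ℝ, 0 < t → (fun x => ∫⁻ y, v y ∂(p t x)) ≤ᵐ[m] v)
    (hvmono : ∀ s t : ℝ, 0 < s → s ≤ t →
        (fun x => ∫⁻ y, v y ∂(p t x)) ≤ᵐ[m] fun x => ∫⁻ y, v y ∂(p s x))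
    (hvlim : ∀ᵐ x ∂m, Tendsto (fun t : ℝ => ∫⁻ y, v y ∂(p t x))
        (nhdsWithin 0 (Set.Ioi 0)) (nhds (v x)))
    (s t : ℝ) (hs : 0 < s) (hst : s ≤ t) :
    (ENNReal.ofReal t)⁻¹ * ∫⁻ x, (u x - ∫⁻ y, u y ∂(p t x)) * v x ∂m
      ≤ (ENNReal.ofReal s)⁻¹ * ∫⁻ x, (u x - ∫⁻ y, u y ∂(p s x)) * v x ∂m := by
  have ht : 0 < t := lt_of_lt_of_le hs hst
  -- abbreviation for the energy functional
  set A : ℝ → ℝ≥0∞ := fun r => ∫⁻ x, (u x - ∫⁻ y, u y ∂(p r x)) * v x ∂m with hA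
  show (ENNReal.ofReal t)⁻¹ * A t ≤ (ENNReal.ofReal s)⁻¹ * A s
  -- monotonicity of A
  have AMono : ∀ a b : ℝ, 0 < a → a ≤ b → A a ≤ A b := by
    intro a b ha hab
    refine lintegral_mono_ae ?_
    filter_upwards [humono a b ha hab] with x hx
    exact mul_le_mul_left (tsub_le_tsub_left hx _) _
  -- the grid identity: A (k*h) = ∑_{j<k} D j
  have grid : ∀ h : ℝ, 0 < h → ∀ k : ℕ, 1 ≤ k →
      A ((k : ℝ) * h) = ∑ j ∈ Finset.range k, energyAux.D m p u v h j := by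
    intro h hh k hk
    induction k, hk using Nat.le_induction with
    | base =>
      simp only [Nat.cast_one, one_mul, Finset.sum_range_one, energyAux.D, if_pos rfl]
      refine lintegral_congr_ae ?_
      filter_upwards [huexc h hh] with x hx
      rw [energyAux.W, min_eq_right hx]
    | succ k hk ih =>
      -- notation
      set Phu : E → ℝ≥0∞ := fun y => ∫⁻ z, u z ∂(p h y) with hPhu
      have mPhu : Measurable Phu := energyAux.measurable_lintegral (p h) hu
      set uh : E → ℝ≥0∞ := fun y => min (u y) (Phu y) with huh
      have muh : Measurable uh := hu.min mPhu
      set e : E → ℝ≥0∞ := fun y => Phu y - u y with he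
      have me : Measurable e := mPhu.sub hu
      have mW : Measurable (energyAux.W p u h) := energyAux.W_measurable p hu h
      have hr : (0 : ℝ) < (k : ℝ) * h := by positivity
      have hcast : ((k + 1 : ℕ) : ℝ) * h = (k : ℝ) * h + h := by push_cast; ring
      -- semigroup
      have hsg : ∀ x : E, (∫⁻ y, u y ∂(p (((k + 1 : ℕ) : ℝ) * h) x))
          = ∫⁻ y, Phu y ∂(p ((k : ℝ) * h) x) := by
        intro x
        rw [hcast]
        exact hsemi h ((k : ℝ) * h) hh hr u hu x
      -- pointwise decompositions
      have hdecomp : ∀ y : E, Phu y = uh y + e y := by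
        intro y
        rcases le_total (Phu y) (u y) with hle | hle
        · rw [huh, he]
          simp only [min_eq_right hle, tsub_eq_zero_of_le hle, add_zero]
        · rw [huh, he]
          simp only [min_eq_left hle, add_tsub_cancel_of_le hle]
      have husum : ∀ y : E, u y = uh y + energyAux.W p u h y := fun y =>
        (add_tsub_cancel_of_le (min_le_left _ _)).symm
      have step1 : ∀ x : E, ∫⁻ y, Phu y ∂(p ((k : ℝ) * h) x)
          = (∫⁻ y, uh y ∂(p ((k : ℝ) * h) x)) + ∫⁻ y, e y ∂(p ((k : ℝ) * h) x) := by
        intro x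
        rw [lintegral_congr hdecomp, lintegral_add_left muh]
      have step2 : ∀ x : E, ∫⁻ y, u y ∂(p ((k : ℝ) * h) x)
          = (∫⁻ y, uh y ∂(p ((k : ℝ) * h) x))
            + ∫⁻ y, energyAux.W p u h y ∂(p ((k : ℝ) * h) x) := by
        intro x
        rw [lintegral_congr husum, lintegral_add_left muh]
      -- key a.e. identity
      have hq'le : (fun x => ∫⁻ y, u y ∂(p (((k + 1 : ℕ) : ℝ) * h) x))
          ≤ᵐ[m] fun x => ∫⁻ y, u y ∂(p ((k : ℝ) * h) x) := by
        refine humono ((k : ℝ) * h) (((k + 1 : ℕ) : ℝ) * h) hr ?_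
        rw [hcast]; linarith
      have hkey : ∀ᵐ x ∂m, (u x - ∫⁻ y, u y ∂(p (((k + 1 : ℕ) : ℝ) * h) x))
          = (u x - ∫⁻ y, u y ∂(p ((k : ℝ) * h) x))
            + ((∫⁻ y, energyAux.W p u h y ∂(p ((k : ℝ) * h) x))
              - ∫⁻ y, e y ∂(p ((k : ℝ) * h) x)) := by
        filter_upwards [huexc ((k : ℝ) * h) hr, hq'le, hufin] with x h1 h2 h3
        have ha : (∫⁻ y, uh y ∂(p ((k : ℝ) * h) x)) ≠ ∞ := by
          refine ne_of_lt (lt_of_le_of_lt ?_ (lt_of_le_of_lt h1 h3))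
          exact lintegral_mono fun y => min_le_left _ _
        have hqq' : (∫⁻ y, u y ∂(p ((k : ℝ) * h) x))
            - (∫⁻ y, u y ∂(p (((k + 1 : ℕ) : ℝ) * h) x))
            = (∫⁻ y, energyAux.W p u h y ∂(p ((k : ℝ) * h) x))
              - ∫⁻ y, e y ∂(p ((k : ℝ) * h) x) := by
          rw [hsg x, step1 x, step2 x, ← tsub_tsub, ENNReal.add_sub_cancel_left ha]
        rw [← hqq']
        exact (tsub_add_tsub_cancel h1 h2).symm
      -- the new increment equals D (k)
      have ezero : e =ᵐ[m] 0 := by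
        filter_upwards [huexc h hh] with x hx
        simp only [he, Pi.zero_apply, tsub_eq_zero_of_le hx]
        exact tsub_eq_zero_of_le hx
      have hEzero : ∫⁻ x, e x * (∫⁻ y, v y ∂(p ((k : ℝ) * h) x)) ∂m = 0 := by
        have : (fun x => e x * (∫⁻ y, v y ∂(p ((k : ℝ) * h) x))) =ᵐ[m] 0 := by
          filter_upwards [ezero] with x hx
          simp [hx]
        rw [lintegral_congr_ae this]
        simp
      have hsymW := hsym ((k : ℝ) * h) hr (energyAux.W p u h) v mW hv
      have hsymE := hsym ((k : ℝ) * h) hr e v me hv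
      have hDk : ∫⁻ x, ((∫⁻ y, energyAux.W p u h y ∂(p ((k : ℝ) * h) x))
            - ∫⁻ y, e y ∂(p ((k : ℝ) * h) x)) * v x ∂m
          = energyAux.D m p u v h k := by
        have hD : energyAux.D m p u v h k
            = ∫⁻ x, energyAux.W p u h x * (∫⁻ y, v y ∂(p ((k : ℝ) * h) x)) ∂m := by
          rw [energyAux.D, if_neg (by omega)]
        refine le_antisymm ?_ ?_
        · rw [hD, ← hsymW]
          exact lintegral_mono fun x => mul_le_mul_left tsub_le_self _
        · rw [hD, ← hsymW]
          have mPrW : Measurable fun x =>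
              ∫⁻ y, energyAux.W p u h y ∂(p ((k : ℝ) * h) x) :=
            energyAux.measurable_lintegral _ mW
          have mPre : Measurable fun x => ∫⁻ y, e y ∂(p ((k : ℝ) * h) x) :=
            energyAux.measurable_lintegral _ me
          calc ∫⁻ x, (∫⁻ y, energyAux.W p u h y ∂(p ((k : ℝ) * h) x)) * v x ∂m
              ≤ ∫⁻ x, (((∫⁻ y, energyAux.W p u h y ∂(p ((k : ℝ) * h) x))
                  - ∫⁻ y, e y ∂(p ((k : ℝ) * h) x))
                  + ∫⁻ y, e y ∂(p ((k : ℝ) * h) x)) * v x ∂m :=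
                lintegral_mono fun x => mul_le_mul_left le_tsub_add _
            _ = (∫⁻ x, ((∫⁻ y, energyAux.W p u h y ∂(p ((k : ℝ) * h) x))
                  - ∫⁻ y, e y ∂(p ((k : ℝ) * h) x)) * v x ∂m)
                + ∫⁻ x, (∫⁻ y, e y ∂(p ((k : ℝ) * h) x)) * v x ∂m := by
                simp_rw [add_mul]
                exact lintegral_add_left ((mPrW.sub mPre).mul hv) _
            _ = ∫⁻ x, ((∫⁻ y, energyAux.W p u h y ∂(p ((k : ℝ) * h) x))
                  - ∫⁻ y, e y ∂(p ((k : ℝ) * h) x)) * v x ∂m := by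
                rw [hsymE, hEzero, add_zero]
      -- put everything together
      have mPru : Measurable fun x => ∫⁻ y, u y ∂(p ((k : ℝ) * h) x) :=
        energyAux.measurable_lintegral _ hu
      have mPrW : Measurable fun x =>
          ∫⁻ y, energyAux.W p u h y ∂(p ((k : ℝ) * h) x) :=
        energyAux.measurable_lintegral _ mW
      have mPre : Measurable fun x => ∫⁻ y, e y ∂(p ((k : ℝ) * h) x) :=
        energyAux.measurable_lintegral _ me
      calc A (((k + 1 : ℕ) : ℝ) * h)
          = ∫⁻ x, ((u x - ∫⁻ y, u y ∂(p ((k : ℝ) * h) x))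
              + ((∫⁻ y, energyAux.W p u h y ∂(p ((k : ℝ) * h) x))
                - ∫⁻ y, e y ∂(p ((k : ℝ) * h) x))) * v x ∂m := by
            refine lintegral_congr_ae ?_
            filter_upwards [hkey] with x hx
            rw [hx]
        _ = A ((k : ℝ) * h)
            + ∫⁻ x, ((∫⁻ y, energyAux.W p u h y ∂(p ((k : ℝ) * h) x))
                - ∫⁻ y, e y ∂(p ((k : ℝ) * h) x)) * v x ∂m := by
            simp_rw [add_mul]
            exact lintegral_add_left ((hu.sub mPru).mul hv) _
        _ = ∑ j ∈ Finset.range k, energyAux.D m p u v h j + energyAux.D m p u v h k := by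
            rw [ih, hDk]
        _ = ∑ j ∈ Finset.range (k + 1), energyAux.D m p u v h j := by
            rw [Finset.sum_range_succ]
  -- antitonicity of D
  have Dant : ∀ h : ℝ, 0 < h → Antitone (energyAux.D m p u v h) := by
    intro h hh
    refine antitone_nat_of_succ_le ?_
    intro j
    rcases Nat.eq_zero_or_pos j with rfl | hj
    · have : energyAux.D m p u v h 1
          = ∫⁻ x, energyAux.W p u h x * (∫⁻ y, v y ∂(p h x)) ∂m := by
        rw [energyAux.D, if_neg (by omega)]
        norm_num
      rw [this, energyAux.D, if_pos rfl]
      refine lintegral_mono_ae ?_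
      filter_upwards [hvexc h hh] with x hx
      exact mul_le_mul_right hx _
    · have hj1 : (0 : ℝ) < (j : ℝ) * h := by
        have : (0 : ℝ) < (j : ℝ) := by exact_mod_cast hj
        positivity
      have hj2 : (j : ℝ) * h ≤ ((j + 1 : ℕ) : ℝ) * h := by
        push_cast
        nlinarith
      rw [energyAux.D, if_neg (by omega), energyAux.D, if_neg (by omega)]
      refine lintegral_mono_ae ?_
      filter_upwards [hvmono ((j : ℝ) * h) (((j + 1 : ℕ) : ℝ) * h) hj1 hj2] with x hx
      exact mul_le_mul_right hx _
  -- main argument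
  by_cases hAs : A s = ∞
  · rw [hAs, ENNReal.mul_top (by simp [ENNReal.inv_ne_zero])]
    exact le_top
  -- key inequality for each N ≥ 1
  have key : ∀ N : ℕ, 1 ≤ N →
      A t ≤ (ENNReal.ofReal (t / s) + ((N : ℝ≥0∞))⁻¹) * A s := by
    intro N hN
    set h : ℝ := s / N with hhdef
    have hNR : (0 : ℝ) < (N : ℝ) := by exact_mod_cast hN
    have hh : 0 < h := div_pos hs hNR
    have hsNh : s = (N : ℝ) * h := by
      rw [hhdef]
      field_simp
    set M : ℕ := ⌈t / h⌉₊ with hMdef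
    have htM : t ≤ (M : ℝ) * h := by
      have := Nat.le_ceil (t / h)
      calc t = (t / h) * h := by field_simp
        _ ≤ (M : ℝ) * h := by
            exact mul_le_mul_of_nonneg_right this (le_of_lt hh)
    have hNM : N ≤ M := by
      have h1 : (N : ℝ) ≤ t / h := by
        rw [le_div_iff₀ hh]
        linarith [hsNh ▸ hst]
      calc N = ⌈(N : ℝ)⌉₊ := (Nat.ceil_natCast N).symm
        _ ≤ M := Nat.ceil_mono h1
    have hM1 : 1 ≤ M := le_trans hN hNM
    -- A t ≤ A (M * h), A s = A (N * h)
    have hAt : A t ≤ ∑ j ∈ Finset.range M, energyAux.D m p u v h j := by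
      rw [← grid h hh M hM1]
      exact AMono t ((M : ℝ) * h) ht htM
    have hAs' : A s = ∑ j ∈ Finset.range N, energyAux.D m p u v h j := by
      rw [← grid h hh N hN, ← hsNh]
    have hcheb := energyAux.cheby (energyAux.D m p u v h) (Dant h hh) hNM
    have hNAt : (N : ℝ≥0∞) * A t ≤ (M : ℝ≥0∞) * A s := by
      calc (N : ℝ≥0∞) * A t ≤ (N : ℝ≥0∞) * ∑ j ∈ Finset.range M, energyAux.D m p u v h j :=
            mul_le_mul_right hAt _
        _ ≤ (M : ℝ≥0∞) * ∑ j ∈ Finset.range N, energyAux.D m p u v h j := hcheb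
        _ = (M : ℝ≥0∞) * A s := by rw [hAs']
    -- bound M
    have hMbound : (M : ℝ≥0∞) ≤ (N : ℝ≥0∞) * ENNReal.ofReal (t / s) + 1 := by
      have h1 : (M : ℝ) ≤ t / h + 1 := le_of_lt (Nat.ceil_lt_add_one (by positivity))
      have h2 : t / h = (N : ℝ) * (t / s) := by
        rw [hhdef]
        field_simp
      calc (M : ℝ≥0∞) = ENNReal.ofReal (M : ℝ) := by
            rw [ENNReal.ofReal_natCast]
        _ ≤ ENNReal.ofReal (t / h + 1) := ENNReal.ofReal_le_ofReal h1
        _ = ENNReal.ofReal ((N : ℝ) * (t / s)) + 1 := by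
            rw [h2, ENNReal.ofReal_add (by positivity) zero_le_one, ENNReal.ofReal_one]
        _ = (N : ℝ≥0∞) * ENNReal.ofReal (t / s) + 1 := by
            rw [ENNReal.ofReal_mul (le_of_lt hNR), ENNReal.ofReal_natCast]
    have hNne : (N : ℝ≥0∞) ≠ 0 := Nat.cast_ne_zero.mpr (by omega)
    have hNtop : (N : ℝ≥0∞) ≠ ∞ := ENNReal.natCast_ne_top N
    have : (N : ℝ≥0∞) * A t ≤ (N : ℝ≥0∞) * ((ENNReal.ofReal (t / s) + ((N : ℝ≥0∞))⁻¹) * A s) := by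
      calc (N : ℝ≥0∞) * A t ≤ (M : ℝ≥0∞) * A s := hNAt
        _ ≤ ((N : ℝ≥0∞) * ENNReal.ofReal (t / s) + 1) * A s :=
            mul_le_mul_left hMbound _
        _ = ((N : ℝ≥0∞) * ENNReal.ofReal (t / s) + (N : ℝ≥0∞) * ((N : ℝ≥0∞))⁻¹) * A s := by
            rw [ENNReal.mul_inv_cancel hNne hNtop]
        _ = (N : ℝ≥0∞) * ((ENNReal.ofReal (t / s) + ((N : ℝ≥0∞))⁻¹) * A s) := by
            rw [← mul_add, mul_assoc]
    calc A t = (N : ℝ≥0∞)⁻¹ * ((N : ℝ≥0∞) * A t) := by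
          rw [← mul_assoc, ENNReal.inv_mul_cancel hNne hNtop, one_mul]
      _ ≤ (N : ℝ≥0∞)⁻¹ * ((N : ℝ≥0∞) * ((ENNReal.ofReal (t / s) + ((N : ℝ≥0∞))⁻¹) * A s)) :=
          mul_le_mul_right this _
      _ = (ENNReal.ofReal (t / s) + ((N : ℝ≥0∞))⁻¹) * A s := by
          rw [← mul_assoc, ENNReal.inv_mul_cancel hNne hNtop, one_mul]
  -- take the limit N → ∞
  have hAts : A t ≤ ENNReal.ofReal (t / s) * A s := by
    have hlim : Tendsto (fun N : ℕ => (ENNReal.ofReal (t / s) + ((N : ℝ≥0∞))⁻¹) * A s)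
        atTop (nhds (ENNReal.ofReal (t / s) * A s)) := by
      have h1 : Tendsto (fun N : ℕ => ENNReal.ofReal (t / s) + ((N : ℝ≥0∞))⁻¹)
          atTop (nhds (ENNReal.ofReal (t / s) + 0)) :=
        Tendsto.add tendsto_const_nhds ENNReal.tendsto_inv_nat_nhds_zero
      rw [add_zero] at h1
      exact ENNReal.Tendsto.mul_const h1 (Or.inr hAs)
    refine ge_of_tendsto hlim ?_
    filter_upwards [eventually_ge_atTop 1] with N hN
    exact key N hN
  -- conclude
  have hts : ENNReal.ofReal (t / s) = ENNReal.ofReal t * (ENNReal.ofReal s)⁻¹ := by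
    rw [div_eq_mul_inv, ENNReal.ofReal_mul (le_of_lt ht)]
    congr 1
    rw [← ENNReal.ofReal_inv_of_pos hs]
  have htne : ENNReal.ofReal t ≠ 0 := by
    simp [ENNReal.ofReal_eq_zero]
    linarith
  calc (ENNReal.ofReal t)⁻¹ * A t
      ≤ (ENNReal.ofReal t)⁻¹ * (ENNReal.ofReal t * (ENNReal.ofReal s)⁻¹ * A s) := by
        rw [← hts]
        exact mul_le_mul_right hAts _
    _ = (ENNReal.ofReal s)⁻¹ * A s := by
        rw [← mul_assoc, ← mul_assoc, ENNReal.inv_mul_cancel htne ENNReal.ofReal_ne_top,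
          one_mul]
end

section
/- Let u be an almost-excessive function for (p_t) and let v be a nonnegative measurable function, finite m-a.e., which is p_t-invariant in the sense that p_t v = v m-a.e. for every t > 0. Then the quantity (1/t)∫_E (u − p_t u)·v dm is independent of t > 0. -/
open MeasureTheory ProbabilityTheory Filter
open scoped ENNReal

/-- Abstract Cauchy-functional-equation step: an additive, monotone function
`φ : ℝ → ℝ≥0∞` on the positive reals satisfies `φ s / s = φ t / t`. -/
theorem ratio_aux (φ : ℝ → ℝ≥0∞)
    (hadd : ∀ a b : ℝ, 0 < a → 0 < b → φ (a + b) = φ a + φ b)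
    (hmono : ∀ a b : ℝ, 0 < a → a ≤ b → φ a ≤ φ b)
    (s t : ℝ) (hs : 0 < s) (ht : 0 < t) :
    (ENNReal.ofReal s)⁻¹ * φ s = (ENNReal.ofReal t)⁻¹ * φ t := by
  -- scaling by positive naturals
  have hscale : ∀ (n : ℕ) (a : ℝ), 0 < a → φ ((n + 1 : ℕ) * a) = (n + 1 : ℕ) * φ a := by
    intro n
    induction n with
    | zero => intro a ha; norm_num
    | succ n ih =>
      intro a ha
      have h1 : ((n + 1 + 1 : ℕ) : ℝ) * a = ((n + 1 : ℕ) : ℝ) * a + a := by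
        push_cast; ring
      have h2 : 0 < ((n + 1 : ℕ) : ℝ) * a := by positivity
      rw [h1, hadd _ a h2 ha, ih a ha]
      push_cast; ring
  have hscale' : ∀ (k : ℕ) (a : ℝ), 1 ≤ k → 0 < a → φ ((k : ℕ) * a) = (k : ℕ) * φ a := by
    intro k a hk ha
    obtain ⟨n, rfl⟩ := Nat.exists_eq_add_of_le hk
    have : 1 + n = n + 1 := by ring
    rw [this]
    exact hscale n a ha
  -- main inequality
  have hle : ∀ a b : ℝ, 0 < a → 0 < b → ENNReal.ofReal b * φ a ≤ ENNReal.ofReal a * φ b := by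
    intro a b ha hb
    by_cases hφb : φ b = ∞
    · rw [hφb, ENNReal.mul_top (ENNReal.ofReal_pos.mpr ha).ne']
      exact le_top
    -- φ a is finite: a ≤ m b for suitable m
    have hφa : φ a ≠ ∞ := by
      set k : ℕ := ⌈a / b⌉₊ + 1 with hk
      have hk1 : (1 : ℕ) ≤ k := by omega
      have hab : a ≤ (k : ℝ) * b := by
        have h1 : a / b ≤ (k : ℝ) := by
          have := Nat.le_ceil (a / b)
          have h2 : ((⌈a / b⌉₊ : ℕ) : ℝ) ≤ (k : ℝ) := by rw [hk]; push_cast; linarith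
          linarith
        calc a = (a / b) * b := by field_simp
        _ ≤ (k : ℝ) * b := by nlinarith
      have := (hmono a ((k : ℝ) * b) ha hab).trans_eq (hscale' k b hk1 hb)
      exact ne_top_of_le_ne_top (ENNReal.mul_ne_top (ENNReal.natCast_ne_top k) hφb) this
    -- pass to reals
    set A : ℝ := (φ a).toReal with hA
    set B : ℝ := (φ b).toReal with hB
    have hA0 : 0 ≤ A := ENNReal.toReal_nonneg
    have hB0 : 0 ≤ B := ENNReal.toReal_nonneg
    have hreal : ∀ n : ℕ, 1 ≤ n → (n : ℝ) * A ≤ ((n : ℝ) * a / b + 1) * B := by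
      intro n hn
      have hnapos : (0 : ℝ) < (n : ℝ) * a := by
        have : (1 : ℝ) ≤ (n : ℝ) := by exact_mod_cast hn
        nlinarith
      set mn : ℕ := ⌈(n : ℝ) * a / b⌉₊ with hmn
      have hmn1 : (1 : ℕ) ≤ mn := Nat.one_le_iff_ne_zero.mpr
        (by
          have : 0 < mn := Nat.ceil_pos.mpr (by positivity)
          omega)
      have hnab : (n : ℝ) * a ≤ (mn : ℝ) * b := by
        have h1 : (n : ℝ) * a / b ≤ (mn : ℝ) := Nat.le_ceil _
        calc (n : ℝ) * a = ((n : ℝ) * a / b) * b := by field_simp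
        _ ≤ (mn : ℝ) * b := by nlinarith
      have hmnle : (mn : ℝ) ≤ (n : ℝ) * a / b + 1 :=
        (Nat.ceil_lt_add_one (by positivity)).le
      have hEn : (n : ℝ≥0∞) * φ a ≤ (mn : ℝ≥0∞) * φ b := by
        calc (n : ℝ≥0∞) * φ a = φ ((n : ℝ) * a) := (hscale' n a hn ha).symm
        _ ≤ φ ((mn : ℝ) * b) := hmono _ _ hnapos hnab
        _ = (mn : ℝ≥0∞) * φ b := hscale' mn b hmn1 hb
      have hfin1 : (n : ℝ≥0∞) * φ a ≠ ∞ := ENNReal.mul_ne_top (by simp) hφa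
      have hfin2 : (mn : ℝ≥0∞) * φ b ≠ ∞ := ENNReal.mul_ne_top (by simp) hφb
      have := ENNReal.toReal_le_toReal hfin1 hfin2 |>.mpr hEn
      rw [ENNReal.toReal_mul, ENNReal.toReal_mul, ENNReal.toReal_natCast, ENNReal.toReal_natCast] at this
      calc (n : ℝ) * A ≤ (mn : ℝ) * B := this
      _ ≤ ((n : ℝ) * a / b + 1) * B := by nlinarith
    -- conclude A ≤ (a/b) B
    have hAB : b * A ≤ a * B := by
      have key : A ≤ a / b * B := by
        apply le_of_forall_pos_le_add
        intro ε hε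
        obtain ⟨n, hn⟩ := exists_nat_gt (B / ε)
        have hn1 : 1 ≤ n + 1 := by omega
        have h := hreal (n + 1) hn1
        have hnpos : (0 : ℝ) < ((n + 1 : ℕ) : ℝ) := by positivity
        have hBn : B / ((n + 1 : ℕ) : ℝ) ≤ ε := by
          rw [div_le_iff₀ hnpos]
          have : B / ε < ((n + 1 : ℕ) : ℝ) := by push_cast; push_cast at hn; linarith
          have := (div_lt_iff₀ hε).mp this
          linarith
        have : A ≤ a / b * B + B / ((n + 1 : ℕ) : ℝ) := by
          have hexp : (((n + 1 : ℕ) : ℝ) * a / b + 1) * B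
              = ((n + 1 : ℕ) : ℝ) * (a / b * B) + B := by ring
          rw [hexp] at h
          have h2 : ((n + 1 : ℕ) : ℝ) * A
              ≤ ((n + 1 : ℕ) : ℝ) * (a / b * B + B / ((n + 1 : ℕ) : ℝ)) := by
            rw [mul_add, mul_div_cancel₀ B (ne_of_gt hnpos)]
            linarith
          exact le_of_mul_le_mul_left h2 hnpos
        linarith
      calc b * A ≤ b * (a / b * B) := by nlinarith
      _ = a * B := by field_simp
    -- back to ℝ≥0∞
    have h1 : ENNReal.ofReal b * φ a = ENNReal.ofReal (b * A) := by
      rw [ENNReal.ofReal_mul hb.le, ENNReal.ofReal_toReal hφa]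
    have h2 : ENNReal.ofReal a * φ b = ENNReal.ofReal (a * B) := by
      rw [ENNReal.ofReal_mul ha.le, ENNReal.ofReal_toReal hφb]
    rw [h1, h2]
    exact ENNReal.ofReal_le_ofReal hAB
  have heq : ENNReal.ofReal t * φ s = ENNReal.ofReal s * φ t :=
    le_antisymm (hle s t hs ht) (hle t s ht hs)
  have hs0 : ENNReal.ofReal s ≠ 0 := (ENNReal.ofReal_pos.mpr hs).ne'
  have ht0 : ENNReal.ofReal t ≠ 0 := (ENNReal.ofReal_pos.mpr ht).ne'
  have hstop : ENNReal.ofReal s ≠ ∞ := ENNReal.ofReal_ne_top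
  have httop : ENNReal.ofReal t ≠ ∞ := ENNReal.ofReal_ne_top
  calc (ENNReal.ofReal s)⁻¹ * φ s
      = (ENNReal.ofReal s)⁻¹ * ((ENNReal.ofReal t)⁻¹ * (ENNReal.ofReal t * φ s)) := by
        rw [← mul_assoc ((ENNReal.ofReal t))⁻¹, ENNReal.inv_mul_cancel ht0 httop, one_mul]
    _ = (ENNReal.ofReal s)⁻¹ * ((ENNReal.ofReal t)⁻¹ * (ENNReal.ofReal s * φ t)) := by
        rw [heq]
    _ = (ENNReal.ofReal t)⁻¹ * ((ENNReal.ofReal s)⁻¹ * (ENNReal.ofReal s * φ t)) := by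
        ring
    _ = (ENNReal.ofReal t)⁻¹ * φ t := by
        rw [← mul_assoc ((ENNReal.ofReal s))⁻¹, ENNReal.inv_mul_cancel hs0 hstop, one_mul]

/-- Let `(p_t)_{t>0}` be a symmetric sub-Markovian semigroup of kernels on a
measurable space `E` with a σ-finite measure `m`.  Let `u` be almost-excessive for `(p_t)` and
let `v` be nonnegative measurable, finite `m`-a.e., and `p_t`-invariant (`p_t v = v` `m`-a.e.
for every `t > 0`).  Then the quantity `(1/t) ∫ (u - p_t u) v dm` is independent of `t > 0`. -/
theorem energy_ratio_invariant
    {E : Type*} [MeasurableSpace E] (m : Measure E) [SigmaFinite m]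
    (p : ℝ → Kernel E E)
    (hsub : ∀ t : ℝ, 0 < t → ∀ x : E, p t x Set.univ ≤ 1)
    (hsemi : ∀ s t : ℝ, 0 < s → 0 < t → ∀ f : E → ℝ≥0∞, Measurable f → ∀ x : E,
        ∫⁻ y, f y ∂(p (t + s) x) = ∫⁻ y, ∫⁻ z, f z ∂(p s y) ∂(p t x))
    (hsym : ∀ t : ℝ, 0 < t → ∀ f g : E → ℝ≥0∞, Measurable f → Measurable g →
        ∫⁻ x, (∫⁻ y, f y ∂(p t x)) * g x ∂m = ∫⁻ x, f x * ∫⁻ y, g y ∂(p t x) ∂m)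
    (u v : E → ℝ≥0∞) (hu : Measurable u) (hv : Measurable v)
    (hufin : ∀ᵐ x ∂m, u x < ∞) (hvfin : ∀ᵐ x ∂m, v x < ∞)
    (huexc : ∀ t : ℝ, 0 < t → (fun x => ∫⁻ y, u y ∂(p t x)) ≤ᵐ[m] u)
    (humono : ∀ s t : ℝ, 0 < s → s ≤ t →
        (fun x => ∫⁻ y, u y ∂(p t x)) ≤ᵐ[m] fun x => ∫⁻ y, u y ∂(p s x))
    (hulim : ∀ᵐ x ∂m, Tendsto (fun t : ℝ => ∫⁻ y, u y ∂(p t x))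
        (nhdsWithin 0 (Set.Ioi 0)) (nhds (u x)))
    (hvinv : ∀ t : ℝ, 0 < t → (fun x => ∫⁻ y, v y ∂(p t x)) =ᵐ[m] v)
    (s t : ℝ) (hs : 0 < s) (ht : 0 < t) :
    (ENNReal.ofReal s)⁻¹ * ∫⁻ x, (u x - ∫⁻ y, u y ∂(p s x)) * v x ∂m
      = (ENNReal.ofReal t)⁻¹ * ∫⁻ x, (u x - ∫⁻ y, u y ∂(p t x)) * v x ∂m := by
  -- measurability of x ↦ ∫ u d(p r x)
  have hfinK : ∀ r : ℝ, 0 < r → IsFiniteKernel (p r) := by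
    intro r hr
    exact ⟨⟨1, ENNReal.one_lt_top, fun a => hsub r hr a⟩⟩
  have hPm : ∀ r : ℝ, 0 < r → Measurable fun x => ∫⁻ y, u y ∂(p r x) := by
    intro r hr
    haveI := hfinK r hr
    exact Measurable.lintegral_kernel hu
  -- the kernels send m-null sets to sets of a.e. zero kernel measure
  have hnull : ∀ r : ℝ, 0 < r → ∀ N : Set E, MeasurableSet N → m N = 0 →
      ∀ᵐ x ∂m, p r x N = 0 := by
    intro r hr N hN hN0
    have h := hsym r hr (N.indicator 1) 1 ((measurable_one).indicator hN) measurable_one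
    simp only [Pi.one_apply, mul_one, one_mul] at h
    have hL : (∫⁻ x, ∫⁻ y, N.indicator (1 : E → ℝ≥0∞) y ∂(p r x) ∂m)
        = ∫⁻ x, p r x N ∂m :=
      lintegral_congr fun x => lintegral_indicator_one hN
    have hmem : ∀ᵐ x ∂m, x ∉ N := by
      rw [ae_iff]
      have hset : {x | ¬ x ∉ N} = N := by ext x; simp
      rw [hset]; exact hN0
    have hR : (∫⁻ x, N.indicator (1 : E → ℝ≥0∞) x * ∫⁻ y, (1 : ℝ≥0∞) ∂(p r x) ∂m) = 0 := by
      have hae : (fun x => N.indicator (1 : E → ℝ≥0∞) x * ∫⁻ y, (1 : ℝ≥0∞) ∂(p r x))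
          =ᵐ[m] 0 := by
        filter_upwards [hmem] with x hx
        simp [Set.indicator_of_notMem hx]
      rw [lintegral_congr_ae hae]; simp
    rw [hL, hR] at h
    exact (lintegral_eq_zero_iff (Kernel.measurable_coe (p r) hN)).mp h
  -- a.e. monotonicity transfers through the kernels
  have hcong : ∀ r : ℝ, 0 < r → ∀ f g : E → ℝ≥0∞, Measurable f → Measurable g →
      f ≤ᵐ[m] g →
      (fun x => ∫⁻ y, f y ∂(p r x)) ≤ᵐ[m] fun x => ∫⁻ y, g y ∂(p r x) := by
    intro r hr f g hf hg hfg
    have hNm : MeasurableSet {y | ¬ f y ≤ g y} := by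
      have : {y | ¬ f y ≤ g y} = {y | g y < f y} := by ext y; simp [not_le]
      rw [this]; exact measurableSet_lt hg hf
    have hN0 : m {y | ¬ f y ≤ g y} = 0 := by rw [← ae_iff]; exact hfg
    filter_upwards [hnull r hr _ hNm hN0] with x hx
    refine lintegral_mono_ae ?_
    rw [ae_iff]
    exact hx
  have hconge : ∀ r : ℝ, 0 < r → ∀ f g : E → ℝ≥0∞, Measurable f → Measurable g →
      f =ᵐ[m] g →
      (fun x => ∫⁻ y, f y ∂(p r x)) =ᵐ[m] fun x => ∫⁻ y, g y ∂(p r x) := by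
    intro r hr f g hf hg hfg
    exact (hcong r hr f g hf hg hfg.le).antisymm (hcong r hr g f hg hf hfg.symm.le)
  -- additivity of φ
  have hadd : ∀ a b : ℝ, 0 < a → 0 < b →
      (∫⁻ x, (u x - ∫⁻ y, u y ∂(p (a + b) x)) * v x ∂m)
        = (∫⁻ x, (u x - ∫⁻ y, u y ∂(p a x)) * v x ∂m)
          + ∫⁻ x, (u x - ∫⁻ y, u y ∂(p b x)) * v x ∂m := by
    intro a b ha hb
    set w : E → ℝ≥0∞ := fun y => u y - ∫⁻ z, u z ∂(p b y) with hw
    have hwm : Measurable w := hu.sub (hPm b hb)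
    -- the semigroup property, pointwise
    have hsg : ∀ x : E, (∫⁻ y, (∫⁻ z, u z ∂(p b y)) ∂(p a x)) = ∫⁻ y, u y ∂(p (a + b) x) :=
      fun x => (hsemi b a hb ha u hu x).symm
    -- w + p_b u = u  (m-a.e.)
    have h1 : (fun y => w y + ∫⁻ z, u z ∂(p b y)) =ᵐ[m] u := by
      filter_upwards [huexc b hb] with y hy
      exact tsub_add_cancel_of_le hy
    -- apply the kernel p_a : Q + P(a+b) = P a  (m-a.e.)
    have h2 : (fun x => (∫⁻ y, w y ∂(p a x)) + ∫⁻ y, u y ∂(p (a + b) x))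
        =ᵐ[m] fun x => ∫⁻ y, u y ∂(p a x) := by
      have h3 := hconge a ha (fun y => w y + ∫⁻ z, u z ∂(p b y)) u
        (hwm.add (hPm b hb)) hu h1
      have h4 : (fun x => ∫⁻ y, (w y + ∫⁻ z, u z ∂(p b y)) ∂(p a x))
          = fun x => (∫⁻ y, w y ∂(p a x)) + ∫⁻ y, u y ∂(p (a + b) x) := by
        funext x
        rw [lintegral_add_left hwm, hsg x]
      rwa [h4] at h3
    -- the key a.e. identity
    have key : (fun x => (u x - ∫⁻ y, u y ∂(p (a + b) x)) * v x) =ᵐ[m]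
        fun x => (u x - ∫⁻ y, u y ∂(p a x)) * v x + (∫⁻ y, w y ∂(p a x)) * v x := by
      filter_upwards [h2, huexc a ha, humono a (a + b) ha (by linarith), hufin]
        with x h2x hax habx hux
      have hfin : (∫⁻ y, u y ∂(p (a + b) x)) ≠ ∞ := ((habx.trans hax).trans_lt hux).ne
      have hQeq : (∫⁻ y, w y ∂(p a x))
          = (∫⁻ y, u y ∂(p a x)) - ∫⁻ y, u y ∂(p (a + b) x) := by
        rw [← h2x, ENNReal.add_sub_cancel_right hfin]
      rw [hQeq, ← add_mul, tsub_add_tsub_cancel hax habx]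
    rw [lintegral_congr_ae key,
      lintegral_add_left (f := fun x => (u x - ∫⁻ y, u y ∂(p a x)) * v x) ((hu.sub (hPm a ha)).mul hv)]
    congr 1
    -- second term equals φ b, by symmetry and invariance of v
    rw [hsym a ha w v hwm hv]
    refine lintegral_congr_ae ?_
    filter_upwards [hvinv a ha] with x hx
    rw [hx]
  -- monotonicity of φ
  have hmono : ∀ a b : ℝ, 0 < a → a ≤ b →
      (∫⁻ x, (u x - ∫⁻ y, u y ∂(p a x)) * v x ∂m)
        ≤ ∫⁻ x, (u x - ∫⁻ y, u y ∂(p b x)) * v x ∂m := by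
    intro a b ha hab
    refine lintegral_mono_ae ?_
    filter_upwards [humono a b ha hab] with x hx
    exact mul_le_mul_left (tsub_le_tsub_left hx _) _
  exact ratio_aux (fun r => ∫⁻ x, (u x - ∫⁻ y, u y ∂(p r x)) * v x ∂m) hadd hmono s t hs ht
end

section
/- Let e : (0,∞) → [0,∞] be a measurable function such that the ratio e(t)/t is nonincreasing in t (equivalently, nondecreasing as t ↓ 0). Then for every α > 0 one has the identity α² ∫_0^∞ e^{−αs} e(s) ds = ∫_0^∞ t e^{−t} · (e(t/α)/(t/α)) dt, the left-hand side is nondecreasing in α, and as α → ∞ it converges (as an increasing limit in [0,∞]) to lim_{t↓0} e(t)/t. -/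
open MeasureTheory Filter
open scoped ENNReal

/-- Scaling change of variables for lintegrals on `(0, ∞)`. -/
lemma aux_scale (g : ℝ → ℝ≥0∞) (hg : Measurable g) {α : ℝ} (hα : 0 < α) :
    ∫⁻ t in Set.Ioi (0 : ℝ), g (t / α)
      = ENNReal.ofReal α * ∫⁻ s in Set.Ioi (0 : ℝ), g s := by
  have hα' : (α : ℝ)⁻¹ ≠ 0 := inv_ne_zero hα.ne'
  have hmeas : Measurable fun t : ℝ => α⁻¹ * t := measurable_const_mul _
  calc ∫⁻ t in Set.Ioi (0 : ℝ), g (t / α)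
      = ∫⁻ t, (Set.Ioi (0 : ℝ)).indicator g (α⁻¹ * t) := by
        rw [← lintegral_indicator measurableSet_Ioi]
        congr 1; ext t
        by_cases ht : t ∈ Set.Ioi (0 : ℝ)
        · have ht' : α⁻¹ * t ∈ Set.Ioi (0 : ℝ) := mul_pos (inv_pos.2 hα) ht
          rw [Set.indicator_of_mem ht, Set.indicator_of_mem ht', div_eq_inv_mul]
        · have ht' : α⁻¹ * t ∉ Set.Ioi (0 : ℝ) := by
            simp only [Set.mem_Ioi, not_lt] at ht ⊢
            exact mul_nonpos_of_nonneg_of_nonpos (inv_nonneg.2 hα.le) ht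
          rw [Set.indicator_of_notMem ht, Set.indicator_of_notMem ht']
    _ = ∫⁻ t, (Set.Ioi (0 : ℝ)).indicator g t
          ∂(Measure.map (fun t : ℝ => α⁻¹ * t) volume) :=
        (lintegral_map (hg.indicator measurableSet_Ioi) hmeas).symm
    _ = ENNReal.ofReal α * ∫⁻ s in Set.Ioi (0 : ℝ), g s := by
        rw [show (fun t : ℝ => α⁻¹ * t) = (α⁻¹ * ·) from rfl,
          Real.map_volume_mul_left hα', lintegral_smul_measure,
          lintegral_indicator measurableSet_Ioi, inv_inv, abs_of_pos hα, smul_eq_mul]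

/-- Let `e : (0,∞) → [0,∞]` be measurable with `e(t)/t` nonincreasing in `t`.
Then for every `α > 0`,
`α² ∫_0^∞ exp(-αs) e(s) ds = ∫_0^∞ t exp(-t) (e(t/α)/(t/α)) dt`,
the left-hand side is nondecreasing in `α`, and as `α → ∞` it converges (as an increasing limit
in `[0,∞]`) to `lim_{t↓0} e(t)/t` (which exists by the assumed monotonicity). -/
theorem laplace_ratio_limit
    (e : ℝ → ℝ≥0∞) (he : Measurable e)
    (hmono : ∀ s t : ℝ, 0 < s → s ≤ t →
        e t / ENNReal.ofReal t ≤ e s / ENNReal.ofReal s) :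
    (∀ α : ℝ, 0 < α →
        (ENNReal.ofReal α) ^ 2 *
            ∫⁻ s in Set.Ioi (0 : ℝ), ENNReal.ofReal (Real.exp (-(α * s))) * e s
          = ∫⁻ t in Set.Ioi (0 : ℝ),
              ENNReal.ofReal (t * Real.exp (-t)) * (e (t / α) / ENNReal.ofReal (t / α))) ∧
    (∀ α β : ℝ, 0 < α → α ≤ β →
        (ENNReal.ofReal α) ^ 2 *
            ∫⁻ s in Set.Ioi (0 : ℝ), ENNReal.ofReal (Real.exp (-(α * s))) * e s
          ≤ (ENNReal.ofReal β) ^ 2 *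
            ∫⁻ s in Set.Ioi (0 : ℝ), ENNReal.ofReal (Real.exp (-(β * s))) * e s) ∧
    (∃ L : ℝ≥0∞,
        Tendsto (fun t : ℝ => e t / ENNReal.ofReal t) (nhdsWithin 0 (Set.Ioi 0)) (nhds L) ∧
        Tendsto (fun α : ℝ =>
            (ENNReal.ofReal α) ^ 2 *
              ∫⁻ s in Set.Ioi (0 : ℝ), ENNReal.ofReal (Real.exp (-(α * s))) * e s)
          atTop (nhds L)) := by
  set φ : ℝ → ℝ≥0∞ := fun t => e t / ENNReal.ofReal t with hφdef
  have hφmeas : Measurable φ := he.div (ENNReal.measurable_ofReal.comp measurable_id)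
  set F : ℝ → ℝ≥0∞ := fun α =>
    (ENNReal.ofReal α) ^ 2 *
      ∫⁻ s in Set.Ioi (0 : ℝ), ENNReal.ofReal (Real.exp (-(α * s))) * e s with hFdef
  set G : ℝ → ℝ≥0∞ := fun α =>
    ∫⁻ t in Set.Ioi (0 : ℝ), ENNReal.ofReal (t * Real.exp (-t)) * φ (t / α) with hGdef
  -- the key identity
  have key : ∀ α : ℝ, 0 < α → F α = G α := by
    intro α hα
    have hmeasg : Measurable fun s : ℝ => ENNReal.ofReal (Real.exp (-(α * s))) * e s := by
      exact ((((measurable_id.const_mul α).neg).exp).ennreal_ofReal).mul he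
    have hm2 : Measurable fun t : ℝ =>
        ENNReal.ofReal (Real.exp (-(α * (t / α)))) * e (t / α) :=
      hmeasg.comp (measurable_id.div_const α)
    have step1 : G α = ENNReal.ofReal α *
        ∫⁻ t in Set.Ioi (0 : ℝ),
          ENNReal.ofReal (Real.exp (-(α * (t / α)))) * e (t / α) := by
      rw [← lintegral_const_mul _ hm2]
      apply setLIntegral_congr_fun measurableSet_Ioi
      intro t ht
      beta_reduce
      have ht0 : (0 : ℝ) < t := ht
      have hta : α * (t / α) = t := by field_simp
      have ht' : ENNReal.ofReal t ≠ 0 := by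
        simp [ENNReal.ofReal_eq_zero, not_le, ht0]
      rw [hta, hφdef]
      beta_reduce
      rw [ENNReal.ofReal_mul ht0.le, ENNReal.ofReal_div_of_pos hα,
        div_eq_mul_inv (e (t / α)),
        ENNReal.inv_div (Or.inl ENNReal.ofReal_ne_top)
          (Or.inl (by simp [ENNReal.ofReal_eq_zero, not_le, hα])),
        div_eq_mul_inv (ENNReal.ofReal α)]
      calc ENNReal.ofReal t * ENNReal.ofReal (Real.exp (-t)) *
            (e (t / α) * (ENNReal.ofReal α * (ENNReal.ofReal t)⁻¹))
          = (ENNReal.ofReal t * (ENNReal.ofReal t)⁻¹) *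
            (ENNReal.ofReal α * (ENNReal.ofReal (Real.exp (-t)) * e (t / α))) := by ring
        _ = ENNReal.ofReal α * (ENNReal.ofReal (Real.exp (-t)) * e (t / α)) := by
            rw [ENNReal.mul_inv_cancel ht' ENNReal.ofReal_ne_top, one_mul]
    have step2 : (∫⁻ t in Set.Ioi (0 : ℝ),
          ENNReal.ofReal (Real.exp (-(α * (t / α)))) * e (t / α))
        = ENNReal.ofReal α *
          ∫⁻ s in Set.Ioi (0 : ℝ), ENNReal.ofReal (Real.exp (-(α * s))) * e s :=
      aux_scale _ hmeasg hα
    rw [hFdef, step1, step2, ← mul_assoc, ← sq]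
  -- monotonicity of G on (0, ∞)
  have hGmono : ∀ α β : ℝ, 0 < α → α ≤ β → G α ≤ G β := by
    intro α β hα hab
    apply setLIntegral_mono' measurableSet_Ioi
    intro t ht
    have ht0 : (0 : ℝ) < t := ht
    refine mul_le_mul_right ?_ _
    exact hmono (t / β) (t / α) (div_pos ht0 (hα.trans_le hab)) (by gcongr)
  have hFzero : ∀ α : ℝ, α ≤ 0 → F α = 0 := by
    intro α h
    rw [hFdef]
    simp [ENNReal.ofReal_eq_zero.2 h, zero_pow]
  have Fmono : Monotone F := by
    intro a b hab
    rcases le_or_gt a 0 with h | h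
    · rw [hFzero a h]; exact zero_le
    · rw [key a h, key b (h.trans_le hab)]; exact hGmono a b h hab
  -- the weight integrates to 1 (Gamma(2) = 1)
  have hwmeas : Measurable fun t : ℝ => ENNReal.ofReal (t * Real.exp (-t)) :=
    (measurable_id.mul (measurable_id.neg.exp)).ennreal_ofReal
  have hC : (∫⁻ t in Set.Ioi (0 : ℝ), ENNReal.ofReal (t * Real.exp (-t))) = 1 := by
    have hint : IntegrableOn (fun t : ℝ => t * Real.exp (-t)) (Set.Ioi 0) := by
      have h2 := Real.GammaIntegral_convergent (by norm_num : (0 : ℝ) < 2)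
      refine h2.congr_fun (fun x hx => ?_) measurableSet_Ioi
      have : ((2 : ℝ) - 1) = 1 := by norm_num
      beta_reduce
      rw [this, Real.rpow_one, mul_comm]
    have hval : (∫ t in Set.Ioi (0 : ℝ), t * Real.exp (-t)) = 1 := by
      have h2 := Real.Gamma_eq_integral (by norm_num : (0 : ℝ) < 2)
      rw [Real.Gamma_two] at h2
      rw [show (∫ t in Set.Ioi (0 : ℝ), t * Real.exp (-t))
          = ∫ x in Set.Ioi (0 : ℝ), Real.exp (-x) * x ^ ((2 : ℝ) - 1) from
        setIntegral_congr_fun measurableSet_Ioi (fun x _ => by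
          norm_num [Real.rpow_one]; ring), ← h2]
    rw [← ofReal_integral_eq_lintegral_ofReal hint
      ((ae_restrict_iff' measurableSet_Ioi).2 (ae_of_all _ fun t ht => by
        have : (0 : ℝ) < t := ht
        positivity)), hval, ENNReal.ofReal_one]
  -- the limit
  set L : ℝ≥0∞ := sSup (φ '' Set.Ioi 0) with hLdef
  have hφanti : AntitoneOn φ (Set.Ioi 0) := fun s hs t _ hst => hmono s t hs hst
  have hL1 : Tendsto φ (nhdsWithin 0 (Set.Ioi 0)) (nhds L) :=
    hφanti.tendsto_nhdsGT (OrderTop.bddAbove _)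
  have hφleL : ∀ u : ℝ, 0 < u → φ u ≤ L := fun u hu => le_sSup ⟨u, hu, rfl⟩
  have hFleL : ∀ α : ℝ, F α ≤ L := by
    intro α
    rcases le_or_gt α 0 with h | h
    · rw [hFzero α h]; exact zero_le
    · rw [key α h]
      calc G α ≤ ∫⁻ t in Set.Ioi (0 : ℝ), ENNReal.ofReal (t * Real.exp (-t)) * L :=
            setLIntegral_mono' measurableSet_Ioi fun t ht =>
              mul_le_mul_right (hφleL _ (div_pos ht h)) _
        _ = (∫⁻ t in Set.Ioi (0 : ℝ), ENNReal.ofReal (t * Real.exp (-t))) * L :=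
            lintegral_mul_const _ hwmeas
        _ = L := by rw [hC, one_mul]
  -- increasing limit along the sequence α = n + 1
  have hseq : Tendsto (fun n : ℕ => G ((n : ℝ) + 1)) atTop (nhds L) := by
    have hmct := lintegral_tendsto_of_tendsto_of_monotone
      (μ := volume.restrict (Set.Ioi (0 : ℝ)))
      (f := fun (n : ℕ) (t : ℝ) =>
        ENNReal.ofReal (t * Real.exp (-t)) * φ (t / ((n : ℝ) + 1)))
      (F := fun t : ℝ => ENNReal.ofReal (t * Real.exp (-t)) * L)
      (fun n => (hwmeas.mul (hφmeas.comp (measurable_id.div_const _))).aemeasurable)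
      ?_ ?_
    · have hFint : (∫⁻ t in Set.Ioi (0 : ℝ),
          ENNReal.ofReal (t * Real.exp (-t)) * L) = L := by
        rw [lintegral_mul_const _ hwmeas, hC, one_mul]
      rw [hFint] at hmct
      exact hmct
    · refine (ae_restrict_iff' measurableSet_Ioi).2 (ae_of_all _ fun t ht => ?_)
      intro n m hnm
      have ht0 : (0 : ℝ) < t := ht
      refine mul_le_mul_right ?_ _
      exact hmono (t / ((m : ℝ) + 1)) (t / ((n : ℝ) + 1))
        (div_pos ht0 (by positivity)) (by gcongr <;> exact_mod_cast hnm)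
    · refine (ae_restrict_iff' measurableSet_Ioi).2 (ae_of_all _ fun t ht => ?_)
      have ht0 : (0 : ℝ) < t := ht
      have harg : Tendsto (fun n : ℕ => t / ((n : ℝ) + 1)) atTop
          (nhdsWithin 0 (Set.Ioi 0)) := by
        rw [tendsto_nhdsWithin_iff]
        constructor
        · exact Tendsto.div_atTop tendsto_const_nhds
            (tendsto_atTop_add_const_right _ _ tendsto_natCast_atTop_atTop)
        · exact Eventually.of_forall fun n => div_pos ht0 (by positivity)
      exact ENNReal.Tendsto.const_mul (hL1.comp harg) (Or.inr ENNReal.ofReal_ne_top)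
  have hsup : (⨆ α : ℝ, F α) = L := by
    refine le_antisymm (iSup_le hFleL) ?_
    refine le_of_tendsto hseq (Eventually.of_forall fun n => ?_)
    rw [← key _ (by positivity : (0 : ℝ) < (n : ℝ) + 1)]
    exact le_iSup F _
  refine ⟨fun α hα => key α hα, fun α β hα hab => Fmono hab, ⟨L, hL1, ?_⟩⟩
  have := tendsto_atTop_iSup Fmono
  rwa [hsup] at this
end

section
/- Let d ≥ 2, R > 0, and let ξ, η ∈ Σ_R with ξ ≠ η. Write K_i(x) = (R² − ‖x‖²)/(Ω_d R ‖x − η‖^d) (interior Poisson kernel) and K_e(x) = (‖x‖² − R²)/(Ω_d R ‖x − η‖^d) (exterior Poisson kernel). Then the half-sum of the inward and outward normal derivatives at ξ equals the Feller kernel of the sphere: (1/2)·(d/ds)|_{s=0} K_i(ξ − s ξ/R) + (1/2)·(d/ds)|_{s=0} K_e(ξ + s ξ/R) = 2/(Ω_d ‖ξ − η‖^d). -/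
open MeasureTheory

/-- The surface area `Ω_d` of the unit sphere in `ℝ^d`, i.e. the `(d-1)`-dimensional Hausdorff
measure of `{x : ‖x‖ = 1}`. -/
noncomputable def unitSphereArea (d : ℕ) : ℝ :=
  (μH[(d : ℝ) - 1] (Metric.sphere (0 : EuclideanSpace ℝ (Fin d)) 1)).toReal

/-- Let `d ≥ 2`, `R > 0` and `ξ, η ∈ Σ_R` with `ξ ≠ η`.  Writing
`K_i(x) = (R² - ‖x‖²)/(Ω_d R ‖x - η‖^d)` for the interior Poisson kernel and
`K_e(x) = (‖x‖² - R²)/(Ω_d R ‖x - η‖^d)` for the exterior Poisson kernel, the half-sum of the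
inward normal derivative of `K_i` and the outward normal derivative of `K_e` at `ξ` equals the
Feller kernel of the sphere:
`(1/2) (d/ds)|₀ K_i(ξ - s ξ/R) + (1/2) (d/ds)|₀ K_e(ξ + s ξ/R) = 2/(Ω_d ‖ξ - η‖^d)`. -/
theorem feller_kernel_of_sphere
    (d : ℕ) (hd : 2 ≤ d) (R : ℝ) (hR : 0 < R)
    (ξ η : EuclideanSpace ℝ (Fin d)) (hξ : ‖ξ‖ = R) (hη : ‖η‖ = R) (hne : ξ ≠ η) :
    (1 / 2) * deriv (fun s : ℝ =>
        (R ^ 2 - ‖ξ - s • (R⁻¹ • ξ)‖ ^ 2) /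
          (unitSphereArea d * R * ‖(ξ - s • (R⁻¹ • ξ)) - η‖ ^ d)) 0
      + (1 / 2) * deriv (fun s : ℝ =>
        (‖ξ + s • (R⁻¹ • ξ)‖ ^ 2 - R ^ 2) /
          (unitSphereArea d * R * ‖(ξ + s • (R⁻¹ • ξ)) - η‖ ^ d)) 0
      = 2 / (unitSphereArea d * ‖ξ - η‖ ^ d) := by
  set A := unitSphereArea d with hA
  have hRne : R ≠ 0 := ne_of_gt hR
  have hsub : ξ - η ≠ 0 := sub_ne_zero.mpr hne
  have hnorm : ‖ξ - η‖ ≠ 0 := norm_ne_zero_iff.mpr hsub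
  by_cases hA0 : A = 0
  · have h1 : (fun s : ℝ =>
        (R ^ 2 - ‖ξ - s • (R⁻¹ • ξ)‖ ^ 2) /
          (A * R * ‖(ξ - s • (R⁻¹ • ξ)) - η‖ ^ d)) = fun _ => (0 : ℝ) := by
      funext s; simp [hA0]
    have h2 : (fun s : ℝ =>
        (‖ξ + s • (R⁻¹ • ξ)‖ ^ 2 - R ^ 2) /
          (A * R * ‖(ξ + s • (R⁻¹ • ξ)) - η‖ ^ d)) = fun _ => (0 : ℝ) := by
      funext s; simp [hA0]
    rw [h1, h2]
    simp [hA0]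
  -- Numerator simplifications
  have hnumi : ∀ s : ℝ, R ^ 2 - ‖ξ - s • (R⁻¹ • ξ)‖ ^ 2 = 2 * R * s - s ^ 2 := by
    intro s
    have h : ξ - s • (R⁻¹ • ξ) = (1 - s * R⁻¹) • ξ := by module
    rw [h, norm_smul, Real.norm_eq_abs, mul_pow, sq_abs, hξ]
    field_simp
    ring
  have hnume : ∀ s : ℝ, ‖ξ + s • (R⁻¹ • ξ)‖ ^ 2 - R ^ 2 = 2 * R * s + s ^ 2 := by
    intro s
    have h : ξ + s • (R⁻¹ • ξ) = (1 + s * R⁻¹) • ξ := by module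
    rw [h, norm_smul, Real.norm_eq_abs, mul_pow, sq_abs, hξ]
    field_simp
    ring
  -- Denominator functions
  set gi : ℝ → ℝ := fun s => A * R * ‖(ξ - s • (R⁻¹ • ξ)) - η‖ ^ d with hgi
  set ge : ℝ → ℝ := fun s => A * R * ‖(ξ + s • (R⁻¹ • ξ)) - η‖ ^ d with hge
  have hci : DifferentiableAt ℝ (fun s : ℝ => (ξ - s • (R⁻¹ • ξ)) - η) 0 := by
    apply DifferentiableAt.sub_const
    exact (differentiableAt_const ξ).sub (differentiableAt_fun_id.smul_const _)
  have hce : DifferentiableAt ℝ (fun s : ℝ => (ξ + s • (R⁻¹ • ξ)) - η) 0 := by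
    apply DifferentiableAt.sub_const
    exact (differentiableAt_const ξ).add (differentiableAt_fun_id.smul_const _)
  have hcine : (ξ - (0:ℝ) • (R⁻¹ • ξ)) - η ≠ 0 := by simpa using hsub
  have hcene : (ξ + (0:ℝ) • (R⁻¹ • ξ)) - η ≠ 0 := by simpa using hsub
  have hdgi : DifferentiableAt ℝ gi 0 := by
    exact ((hci.norm ℝ hcine).pow d).const_mul _
  have hdge : DifferentiableAt ℝ ge 0 := by
    exact ((hce.norm ℝ hcene).pow d).const_mul _
  have hgi0 : gi 0 = A * R * ‖ξ - η‖ ^ d := by simp [hgi]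
  have hge0 : ge 0 = A * R * ‖ξ - η‖ ^ d := by simp [hge]
  have hgine : gi 0 ≠ 0 := by
    rw [hgi0]; positivity
  have hgene : ge 0 ≠ 0 := by
    rw [hge0]; positivity
  -- derivatives of numerators
  have hfi : HasDerivAt (fun s : ℝ => 2 * R * s - s ^ 2) (2 * R) 0 := by
    have h1 : HasDerivAt (fun s : ℝ => 2 * R * s) (2 * R) 0 := by
      simpa using (hasDerivAt_id (0:ℝ)).const_mul (2 * R)
    have h2 : HasDerivAt (fun s : ℝ => s ^ 2) 0 0 := by
      simpa using hasDerivAt_pow 2 (0:ℝ)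
    simpa using h1.fun_sub h2
  have hfe : HasDerivAt (fun s : ℝ => 2 * R * s + s ^ 2) (2 * R) 0 := by
    have h1 : HasDerivAt (fun s : ℝ => 2 * R * s) (2 * R) 0 := by
      simpa using (hasDerivAt_id (0:ℝ)).const_mul (2 * R)
    have h2 : HasDerivAt (fun s : ℝ => s ^ 2) 0 0 := by
      simpa using hasDerivAt_pow 2 (0:ℝ)
    simpa using h1.fun_add h2
  -- quotient derivatives
  have hdivi := (hfi.fun_div hdgi.hasDerivAt hgine).deriv
  have hdive := (hfe.fun_div hdge.hasDerivAt hgene).deriv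
  have heqi : (fun s : ℝ =>
      (R ^ 2 - ‖ξ - s • (R⁻¹ • ξ)‖ ^ 2) / (A * R * ‖(ξ - s • (R⁻¹ • ξ)) - η‖ ^ d))
      = fun s => (2 * R * s - s ^ 2) / gi s := by
    funext s; rw [hnumi s]
  have heqe : (fun s : ℝ =>
      (‖ξ + s • (R⁻¹ • ξ)‖ ^ 2 - R ^ 2) / (A * R * ‖(ξ + s • (R⁻¹ • ξ)) - η‖ ^ d))
      = fun s => (2 * R * s + s ^ 2) / ge s := by
    funext s; rw [hnume s]
  rw [heqi, heqe, hdivi, hdive, hgi0, hge0]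
  have hpow : ‖ξ - η‖ ^ d ≠ 0 := pow_ne_zero _ hnorm
  field_simp
  ring
end
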